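/- Let G and G' be monoidal categories with monoidal weights W and W', let X and X' be categories, and let T : G ⥤ (X ⥤ X) and T' : G' ⥤ (X' ⥤ X') be strict monoidal functors into the respective endofunctor monoidal categories, meaning T(unit) = 𝟭_X and T(g ⊗ h) equals the composite endofunctor Z ↦ T(g)(T(h)(Z)) with the monoidal structure isomorphisms the canonical ones induced by these equalities, and similarly for T'. Let H : G ⥤ G' be a strict monoidal functor with W'(H(g)) ≤ W(g) for every object g of G, and let K : X ⥤ X' be a functor such that for every object g of G, the composite functor T(g) followed by K equals K followed by T'(H(g)) (equality of functors), and such that for every morphism α : g ⟶ h in G and every object X₀ of X, K applied to the component of T(α) at X₀ equals, modulo the above equalities of functors (via eqToHom), the component of T'(H(α)) at K(X₀). Then for all objects X₀, Y₀ of X: d_{T',W'}(K(X₀), K(Y₀)) ≤ d_{T,W}(X₀, Y₀). -/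
import Mathlib


open CategoryTheory MonoidalCategory Functor.LaxMonoidal Functor.OplaxMonoidal
open scoped ENNReal

attribute [local instance] CategoryTheory.endofunctorMonoidalCategory

section Defs

variable {G : Type*} [Category G] [MonoidalCategory G]
variable {X : Type*} [Category X]

/-- Objects `X₀`, `Y₀` of `X` are `(g,h)`-interleaved with respect to a monoidal functor
`T : G ⥤ (X ⥤ X)` into the monoidal category of endofunctors of `X` (tensor given by
composition of functors; Mathlib's convention `F ⊗ G = F ⋙ G` is the mirror image of the
paper's convention `T_{g ⊗ h} = T_g ∘ T_h`). -/
def Interleaved (T : G ⥤ (X ⥤ X)) [T.Monoidal] (g h : G) (X₀ Y₀ : X) : Prop :=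
  ∃ (φ : X₀ ⟶ (T.obj g).obj Y₀) (ψ : Y₀ ⟶ (T.obj h).obj X₀)
    (α : 𝟙_ G ⟶ g ⊗ h) (β : 𝟙_ G ⟶ h ⊗ g),
    φ ≫ (T.obj g).map ψ = (ε T).app X₀ ≫ (T.map β).app X₀ ≫ (δ T h g).app X₀ ∧
    ψ ≫ (T.obj h).map φ = (ε T).app Y₀ ≫ (T.map α).app Y₀ ≫ (δ T g h).app Y₀

/-- The `G`-interleaving distance on the objects of `X` determined by a monoidal functor
`T : G ⥤ (X ⥤ X)` and a monoidal weight `W` on `G`. -/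
noncomputable def interleavingDist (T : G ⥤ (X ⥤ X)) [T.Monoidal] (W : G → ℝ≥0∞)
    (X₀ Y₀ : X) : ℝ≥0∞ :=
  sInf {e | ∃ g h : G, Interleaved T g h X₀ Y₀ ∧ e = max (W g) (W h)}

end Defs

/-- **stability for monoidal functor interleavings.** Let `T`, `T'` be strict
monoidal functors into endofunctor categories, with monoidal weights `W`, `W'`.  An equivariant
Lipschitz pair `(H, K)` — a strict monoidal functor `H : G ⥤ G'` which does not increase
weights, and a functor `K : X ⥤ X'` intertwining the actions on objects and on the natural
transformations `T.map α` — induces a `1`-Lipschitz map for the interleaving distances. -/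
theorem stmt_10 {G : Type*} [Category G] [MonoidalCategory G]
    {G' : Type*} [Category G'] [MonoidalCategory G']
    {X : Type*} [Category X] {X' : Type*} [Category X']
    -- monoidal weights
    (W : G → ℝ≥0∞) (hW_unit : W (𝟙_ G) = 0) (hW_tensor : ∀ g h : G, W (g ⊗ h) ≤ W g + W h)
    (W' : G' → ℝ≥0∞) (hW'_unit : W' (𝟙_ G') = 0)
    (hW'_tensor : ∀ g h : G', W' (g ⊗ h) ≤ W' g + W' h)
    -- strict monoidal functors into the endofunctor categories
    (T : G ⥤ (X ⥤ X)) [T.Monoidal]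
    (hT_unit : T.obj (𝟙_ G) = 𝟭 X)
    (hT_tensor : ∀ g h : G, T.obj (g ⊗ h) = T.obj g ⊗ T.obj h)
    (hT_ε : ε T = eqToHom hT_unit.symm)
    (hT_μ : ∀ g h : G, μ T g h = eqToHom (hT_tensor g h).symm)
    (T' : G' ⥤ (X' ⥤ X')) [T'.Monoidal]
    (hT'_unit : T'.obj (𝟙_ G') = 𝟭 X')
    (hT'_tensor : ∀ g h : G', T'.obj (g ⊗ h) = T'.obj g ⊗ T'.obj h)
    (hT'_ε : ε T' = eqToHom hT'_unit.symm)
    (hT'_μ : ∀ g h : G', μ T' g h = eqToHom (hT'_tensor g h).symm)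
    -- a strict monoidal functor `H : G ⥤ G'` which does not increase weights
    (H : G ⥤ G') [H.Monoidal]
    (hH_unit : H.obj (𝟙_ G) = 𝟙_ G')
    (hH_tensor : ∀ g h : G, H.obj (g ⊗ h) = H.obj g ⊗ H.obj h)
    (hH_ε : ε H = eqToHom hH_unit.symm)
    (hH_μ : ∀ g h : G, μ H g h = eqToHom (hH_tensor g h).symm)
    (hH_lip : ∀ g : G, W' (H.obj g) ≤ W g)
    -- an equivariant functor `K : X ⥤ X'`
    (K : X ⥤ X')
    (hK : ∀ g : G, T.obj g ⋙ K = K ⋙ T'.obj (H.obj g))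
    (hK_map : ∀ {g h : G} (α : g ⟶ h) (X₀ : X),
      K.map ((T.map α).app X₀) =
        eqToHom (Functor.congr_obj (hK g) X₀) ≫ (T'.map (H.map α)).app (K.obj X₀) ≫
          eqToHom (Functor.congr_obj (hK h) X₀).symm) :
    ∀ X₀ Y₀ : X,
      interleavingDist T' W' (K.obj X₀) (K.obj Y₀) ≤ interleavingDist T W X₀ Y₀ := by
  -- δ is forced to be an eqToHom
  have hδ' : ∀ g h : G', δ T' g h = eqToHom (hT'_tensor g h) := by
    intro g h
    have h1 := Functor.Monoidal.μ_δ (F := T') g h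
    rw [hT'_μ] at h1
    rw [eqToHom_comp_iff] at h1
    simpa using h1
  have hδ : ∀ g h : G, δ T g h = eqToHom (hT_tensor g h) := by
    intro g h
    have h1 := Functor.Monoidal.μ_δ (F := T) g h
    rw [hT_μ] at h1
    rw [eqToHom_comp_iff] at h1
    simpa using h1
  have key : ∀ (g h : G) (X₀ Y₀ : X), Interleaved T g h X₀ Y₀ →
      Interleaved T' (H.obj g) (H.obj h) (K.obj X₀) (K.obj Y₀) := by
    rintro g h X₀ Y₀ ⟨φ, ψ, α, β, h1, h2⟩
    refine ⟨K.map φ ≫ eqToHom (Functor.congr_obj (hK g) Y₀),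
      K.map ψ ≫ eqToHom (Functor.congr_obj (hK h) X₀),
      eqToHom hH_unit.symm ≫ H.map α ≫ eqToHom (hH_tensor g h),
      eqToHom hH_unit.symm ≫ H.map β ≫ eqToHom (hH_tensor h g), ?_, ?_⟩
    · have e1 := congrArg K.map h1
      rw [K.map_comp, show K.map ((T.obj g).map ψ) = (T.obj g ⋙ K).map ψ from rfl,
        Functor.congr_hom (hK g) ψ] at e1
      simp only [K.map_comp, hT_ε, hδ, eqToHom_app, eqToHom_map, hK_map,
        Category.assoc, eqToHom_trans, eqToHom_trans_assoc] at e1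
      simp only [hT'_ε, hδ', T'.map_comp, eqToHom_map, eqToHom_app, NatTrans.comp_app,
        Functor.map_comp, Category.assoc, eqToHom_trans, eqToHom_trans_assoc,
        Functor.comp_map]
      simp only [Functor.comp_obj, Functor.comp_map] at e1 ⊢
      replace e1 := e1.symm
      rw [eqToHom_comp_iff] at e1
      conv_rhs at e1 => rw [← Category.assoc, ← Category.assoc]
      rw [comp_eqToHom_iff] at e1
      symm
      rw [eqToHom_comp_iff]
      conv_rhs => rw [← Category.assoc, ← Category.assoc]
      rw [comp_eqToHom_iff]
      simp only [Category.assoc, eqToHom_trans, eqToHom_trans_assoc] at e1 ⊢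
      exact e1
    · have e2 := congrArg K.map h2
      rw [K.map_comp, show K.map ((T.obj h).map φ) = (T.obj h ⋙ K).map φ from rfl,
        Functor.congr_hom (hK h) φ] at e2
      simp only [K.map_comp, hT_ε, hδ, eqToHom_app, eqToHom_map, hK_map,
        Category.assoc, eqToHom_trans, eqToHom_trans_assoc] at e2
      simp only [hT'_ε, hδ', T'.map_comp, eqToHom_map, eqToHom_app, NatTrans.comp_app,
        Functor.map_comp, Category.assoc, eqToHom_trans, eqToHom_trans_assoc,
        Functor.comp_map]
      simp only [Functor.comp_obj, Functor.comp_map] at e2 ⊢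
      replace e2 := e2.symm
      rw [eqToHom_comp_iff] at e2
      conv_rhs at e2 => rw [← Category.assoc, ← Category.assoc]
      rw [comp_eqToHom_iff] at e2
      symm
      rw [eqToHom_comp_iff]
      conv_rhs => rw [← Category.assoc, ← Category.assoc]
      rw [comp_eqToHom_iff]
      simp only [Category.assoc, eqToHom_trans, eqToHom_trans_assoc] at e2 ⊢
      exact e2
  intro X₀ Y₀
  refine le_sInf ?_
  rintro e ⟨g, h, hint, rfl⟩
  refine le_trans (sInf_le ⟨H.obj g, H.obj h, key g h X₀ Y₀ hint, rfl⟩) ?_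
  exact max_le_max (hH_lip g) (hH_lip h)
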